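/- Let (L, [·,·], ε, α) be a multiplicative Hom-Lie color algebra and f : L → L an even linear map with f∘α = α∘f. Define x ∗ y := [f(x), y], and let Z(α(L)) = {u ∈ L : [u, α(y)] = 0 for all y ∈ L}. Then (L, ∗, ε, α) is a Hom-Novikov color algebra if and only if for all homogeneous x, y, z: (i) f([f(x),y] + [x,f(y)]) − [f(x),f(y)] ∈ Z(α(L)), and (ii) [f([f(x),y]), α(z)] = ε(y,z)[f([f(x),z]), α(y)]. -/

import Mathlib

open scoped TensorProduct

variable {K G A : Type*}

/-- A skew-symmetric bicharacter on the abelian group `G` with values in the field `K`. -/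
def IsBicharacter [Field K] [AddCommGroup G] (ε : G → G → K) : Prop :=
  (∀ a b, ε a b ≠ 0) ∧
  (∀ a b, ε a b * ε b a = 1) ∧
  (∀ a b c, ε a (b + c) = ε a b * ε a c) ∧
  (∀ a b c, ε (a + b) c = ε a c * ε b c)

section Defs

variable [Field K] [AddCommGroup G] [AddCommGroup A] [Module K A]

/-- The bilinear product `mul` respects the grading `𝒜`: `A_a · A_b ⊆ A_{a+b}`. -/
def IsGradedMul (𝒜 : G → Submodule K A) (mul : A →ₗ[K] A →ₗ[K] A) : Prop :=
  ∀ a b : G, ∀ x ∈ 𝒜 a, ∀ y ∈ 𝒜 b, mul x y ∈ 𝒜 (a + b)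

/-- An even linear map: `f(A_a) ⊆ A_a`. -/
def IsEven (𝒜 : G → Submodule K A) (f : A →ₗ[K] A) : Prop :=
  ∀ a : G, ∀ x ∈ 𝒜 a, f x ∈ 𝒜 a

/-- `ε`-commutativity: `x·y = ε(x,y) y·x` for homogeneous `x, y`. -/
def IsEpsCommutative (𝒜 : G → Submodule K A) (ε : G → G → K)
    (mul : A →ₗ[K] A →ₗ[K] A) : Prop :=
  ∀ a b : G, ∀ x ∈ 𝒜 a, ∀ y ∈ 𝒜 b, mul x y = ε a b • mul y x

/-- A Hom-associative color algebra: `α(x)·(y·z) = (x·y)·α(z)` for homogeneous `x, y, z`. -/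
def IsHomAssociative (𝒜 : G → Submodule K A) (mul : A →ₗ[K] A →ₗ[K] A)
    (α : A →ₗ[K] A) : Prop :=
  IsGradedMul 𝒜 mul ∧ IsEven 𝒜 α ∧
  ∀ a b c : G, ∀ x ∈ 𝒜 a, ∀ y ∈ 𝒜 b, ∀ z ∈ 𝒜 c,
    mul (α x) (mul y z) = mul (mul x y) (α z)

/-- A Hom-Novikov color algebra. -/
def IsHomNovikov (𝒜 : G → Submodule K A) (ε : G → G → K)
    (mul : A →ₗ[K] A →ₗ[K] A) (α : A →ₗ[K] A) : Prop :=
  IsGradedMul 𝒜 mul ∧ IsEven 𝒜 α ∧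
  (∀ a b c : G, ∀ x ∈ 𝒜 a, ∀ y ∈ 𝒜 b, ∀ z ∈ 𝒜 c,
    mul (mul x y) (α z) = ε b c • mul (mul x z) (α y)) ∧
  (∀ a b c : G, ∀ x ∈ 𝒜 a, ∀ y ∈ 𝒜 b, ∀ z ∈ 𝒜 c,
    mul (mul x y) (α z) - mul (α x) (mul y z)
      = ε a b • (mul (mul y x) (α z) - mul (α y) (mul x z)))

/-- A Hom-Lie color algebra. -/
def IsHomLie (𝒜 : G → Submodule K A) (ε : G → G → K)
    (br : A →ₗ[K] A →ₗ[K] A) (α : A →ₗ[K] A) : Prop :=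
  IsGradedMul 𝒜 br ∧ IsEven 𝒜 α ∧
  (∀ a b : G, ∀ x ∈ 𝒜 a, ∀ y ∈ 𝒜 b, br x y = -(ε a b • br y x)) ∧
  (∀ a b c : G, ∀ x ∈ 𝒜 a, ∀ y ∈ 𝒜 b, ∀ z ∈ 𝒜 c,
    ε c a • br (α x) (br y z) + ε a b • br (α y) (br z x)
      + ε b c • br (α z) (br x y) = 0)

/-- The `ε`-commutator `[x, y] = x·y − ε(a,b) y·x` of elements `x, y`
of degrees `a, b` respectively. -/
def homBracket (ε : G → G → K) (mul : A →ₗ[K] A →ₗ[K] A)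
    (a b : G) (x y : A) : A :=
  mul x y - ε a b • mul y x

end Defs
/-- for a multiplicative Hom-Lie color algebra `(L,[·,·],ε,α)` and an
even linear map `f` commuting with `α`, the product `x ∗ y = [f(x), y]` gives a
Hom-Novikov color algebra iff conditions (i) (membership in `Z(α(L))`) and (ii)
hold for all homogeneous `x, y, z`. -/
theorem statement11 {K G A : Type*} [Field K] [AddCommGroup G] [DecidableEq G]
    [AddCommGroup A] [Module K A]
    (𝒜 : G → Submodule K A) [DirectSum.Decomposition 𝒜]
    (ε : G → G → K) (hε : IsBicharacter ε)
    (br : A →ₗ[K] A →ₗ[K] A) (α : A →ₗ[K] A)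
    (hL : IsHomLie 𝒜 ε br α)
    (hmult : ∀ x y : A, α (br x y) = br (α x) (α y))
    (f : A →ₗ[K] A) (hfeven : IsEven 𝒜 f) (hfα : f ∘ₗ α = α ∘ₗ f) :
    IsHomNovikov 𝒜 ε (br ∘ₗ f) α ↔
      ((∀ a b : G, ∀ x ∈ 𝒜 a, ∀ y ∈ 𝒜 b,
          f (br (f x) y + br x (f y)) - br (f x) (f y)
            ∈ {u : A | ∀ v : A, br u (α v) = 0}) ∧
       (∀ a b c : G, ∀ x ∈ 𝒜 a, ∀ y ∈ 𝒜 b, ∀ z ∈ 𝒜 c,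
          br (f (br (f x) y)) (α z) = ε b c • br (f (br (f x) z)) (α y))) := by

  obtain ⟨hne, hsym, haddR, haddL⟩ := hε
  obtain ⟨hgr, hαe, hskew, hjac⟩ := hL
  have hfα' : ∀ x : A, f (α x) = α (f x) := fun x => LinearMap.congr_fun hfα x
  -- Key consequence of the Hom-Jacobi identity
  have key : ∀ a b c : G, ∀ x ∈ 𝒜 a, ∀ y ∈ 𝒜 b, ∀ z ∈ 𝒜 c,
      br (α (f x)) (br (f y) z) - ε a b • br (α (f y)) (br (f x) z)
        = br (br (f x) (f y)) (α z) := by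
    intro a b c x hx y hy z hz
    have hx' := hfeven a x hx
    have hy' := hfeven b y hy
    have J := hjac a b c (f x) hx' (f y) hy' z hz
    rw [hskew c a z hz (f x) hx',
        hskew c (a + b) (α z) (hαe c z hz) (br (f x) (f y)) (hgr a b (f x) hx' (f y) hy')] at J
    simp only [map_neg, map_smul, smul_neg, smul_smul] at J
    have hcoef : ε b c * ε c (a + b) = ε c a := by
      rw [haddR c a b, mul_comm (ε c a) (ε c b), ← mul_assoc, hsym b c, one_mul]
    rw [hcoef] at J
    refine smul_right_injective A (hne c a) ?_
    show ε c a • (br (α (f x)) (br (f y) z) - ε a b • br (α (f y)) (br (f x) z))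
        = ε c a • br (br (f x) (f y)) (α z)
    linear_combination (norm := module) J
  -- The main rewriting identity
  have Deq : ∀ a b c : G, ∀ x ∈ 𝒜 a, ∀ y ∈ 𝒜 b, ∀ z ∈ 𝒜 c,
      (br (f (br (f x) y)) (α z) - br (α (f x)) (br (f y) z))
        - ε a b • (br (f (br (f y) x)) (α z) - br (α (f y)) (br (f x) z))
      = br (f (br (f x) y + br x (f y)) - br (f x) (f y)) (α z) := by
    intro a b c x hx y hy z hz
    have k := key a b c x hx y hy z hz
    have hxy : br x (f y) = -(ε a b • br (f y) x) :=
      hskew a b x hx (f y) (hfeven b y hy)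
    rw [hxy]
    simp only [map_add, map_neg, map_smul, map_sub, LinearMap.add_apply, LinearMap.sub_apply,
      LinearMap.neg_apply, LinearMap.smul_apply, smul_sub]
    linear_combination (norm := module) -k
  constructor
  · rintro ⟨-, -, hN1, hN2⟩
    constructor
    · intro a b x hx y hy
      have hz0 : ∀ c : G, ∀ z ∈ 𝒜 c,
          br (f (br (f x) y + br x (f y)) - br (f x) (f y)) (α z) = 0 := by
        intro c z hz
        have h2 := hN2 a b c x hx y hy z hz
        simp only [LinearMap.comp_apply] at h2
        rw [hfα' x, hfα' y] at h2
        rw [← Deq a b c x hx y hy z hz, h2, sub_self]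
      simp only [Set.mem_setOf_eq]
      intro v
      refine DirectSum.Decomposition.inductionOn 𝒜
          (motive := fun v => br (f (br (f x) y + br x (f y)) - br (f x) (f y)) (α v) = 0) ?_ ?_ ?_ v
      · simp
      · intro i m; exact hz0 i m m.2
      · intro m m' hm hm'
        rw [map_add α m m', map_add (br _) (α m) (α m'), hm, hm', add_zero]
    · intro a b c x hx y hy z hz
      have := hN1 a b c x hx y hy z hz
      simpa only [LinearMap.comp_apply] using this
  · rintro ⟨h1, h2⟩
    refine ⟨?_, hαe, ?_, ?_⟩
    · intro a b x hx y hy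
      simpa only [LinearMap.comp_apply] using hgr a b (f x) (hfeven a x hx) y hy
    · intro a b c x hx y hy z hz
      simpa only [LinearMap.comp_apply] using h2 a b c x hx y hy z hz
    · intro a b c x hx y hy z hz
      have hW : br (f (br (f x) y + br x (f y)) - br (f x) (f y)) (α z) = 0 :=
        h1 a b x hx y hy z
      have hD := Deq a b c x hx y hy z hz
      rw [hW] at hD
      simp only [LinearMap.comp_apply]
      rw [hfα' x, hfα' y]
      exact sub_eq_zero.mp hD
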